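/- arXiv:2303.02586 — 6 statements merged into one kernel-verified Lean document; each statement's English description precedes it below -/
import Mathlib

section
/- Let D be a real diagonal positive definite matrix, u ∈ ℂᴺ, and W = D + u·uᴴ (which is Hermitian positive definite). Let h be a proper closed convex function. If β* ∈ ℂ satisfies uᴴ(x − prox_{λh}^D(x − D⁻¹u·β*)) + β* = 0, then prox_{λh}^W(x) = prox_{λh}^D(x − D⁻¹u·β*). -/
open Matrix

/-- The objective of the weighted proximal mapping for weight `M`:
`w ↦ λ h(w) + (1/2)(w−v)ᴴ M (w−v)`. -/
noncomputable def proxObj {N : ℕ} (M : Matrix (Fin N) (Fin N) ℂ) (lam : ℝ)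
    (h : (Fin N → ℂ) → ℝ) (v w : Fin N → ℂ) : ℝ :=
  lam * h w + (1 / 2) * (dotProduct (star (w - v)) (M.mulVec (w - v))).re

/-- Becker's theorem (here with `W = D + uuᴴ`): if `β*` is a zero of
`β ↦ uᴴ(x − prox_{λh}^D(x − D⁻¹uβ)) + β`, then
`prox_{λh}^W(x) = prox_{λh}^D(x − D⁻¹uβ*)`, i.e. the latter point minimizes the
`W`-weighted proximal objective at `x`. -/
theorem stmt_5 {N : ℕ} (d : Fin N → ℝ) (hd : ∀ i, 0 < d i)
    (u x : Fin N → ℂ) (lam : ℝ) (hlam : 0 < lam)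
    (h : (Fin N → ℂ) → ℝ) (hconv : ConvexOn ℝ Set.univ h)
    (hlsc : LowerSemicontinuous h)
    (D : Matrix (Fin N) (Fin N) ℂ) (hD : D = Matrix.diagonal fun i => (d i : ℂ))
    (W : Matrix (Fin N) (Fin N) ℂ) (hW : W = D + Matrix.vecMulVec u (star u))
    (proxD : (Fin N → ℂ) → (Fin N → ℂ))
    (hproxD : ∀ v w, proxObj D lam h v (proxD v) ≤ proxObj D lam h v w)
    (β : ℂ)
    (hβ : dotProduct (star u) (x - proxD (x - β • D⁻¹.mulVec u)) + β = 0) :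
    ∀ w, proxObj W lam h x (proxD (x - β • D⁻¹.mulVec u)) ≤ proxObj W lam h x w := by
  intro w
  have hd0 : ∀ i, (d i : ℂ) ≠ 0 := fun i => by
    exact_mod_cast Complex.ofReal_ne_zero.mpr (ne_of_gt (hd i))
  set b : Fin N → ℂ := D⁻¹.mulVec u with hbdef
  have hDinv : D⁻¹ = Matrix.diagonal (fun i => (d i : ℂ)⁻¹) := by
    apply Matrix.inv_eq_right_inv
    rw [hD, Matrix.diagonal_mul_diagonal]
    have : (fun i => (d i : ℂ) * (d i : ℂ)⁻¹) = fun _ => 1 :=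
      funext fun i => mul_inv_cancel₀ (hd0 i)
    rw [this, Matrix.diagonal_one]
  have hb : b = fun i => (d i : ℂ)⁻¹ * u i := by
    funext i
    simp [hbdef, hDinv, Matrix.mulVec_diagonal]
  have hDb : D.mulVec b = u := by
    funext i
    simp only [hb, hD, Matrix.mulVec_diagonal, ← mul_assoc]
    rw [mul_inv_cancel₀ (hd0 i), one_mul]
  set v : Fin N → ℂ := x - β • b with hvdef
  set p : Fin N → ℂ := proxD v with hpdef
  set s : ℂ := dotProduct (star u) b with hsdef
  have hs : star s = s := by
    simp only [hsdef, hb, dotProduct, star_sum, star_mul', Pi.star_apply]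
    refine Finset.sum_congr rfl fun i _ => ?_
    simp [Complex.star_def, _root_.map_mul, map_inv₀, Complex.conj_ofReal]
    ring
  have f2 : dotProduct (star b) u = s := by
    simp only [hsdef, hb, dotProduct, Pi.star_apply]
    refine Finset.sum_congr rfl fun i _ => ?_
    simp [Complex.star_def, _root_.map_mul, map_inv₀, Complex.conj_ofReal]
    ring
  have hvmv : ∀ q, (Matrix.vecMulVec u (star u)).mulVec q
      = dotProduct (star u) q • u := by
    intro q
    funext i
    simp [Matrix.vecMulVec_apply, Matrix.mulVec, dotProduct, Finset.sum_mul,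
      Finset.mul_sum]
    refine Finset.sum_congr rfl fun j _ => ?_
    ring
  -- key identity
  have key : ∀ w : Fin N → ℂ, proxObj W lam h x w = proxObj D lam h v w
      + (1/2) * Complex.normSq (dotProduct (star u) (w - x) - β)
      - (1/2) * ((β * star β) * (1 + s)).re := by
    intro w
    set a : Fin N → ℂ := w - v with hadef
    have hax : w - x = a - β • b := by
      simp only [hadef, hvdef]
      abel
    set t : ℂ := dotProduct (star u) a with htdef
    have f1 : dotProduct (star a) u = star t := by
      rw [htdef, ← Matrix.star_dotProduct_star, star_star]
    have f5 : dotProduct (star b) (D.mulVec a) = t := by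
      simp only [htdef, hb, hD, dotProduct, Matrix.mulVec_diagonal, Pi.star_apply]
      refine Finset.sum_congr rfl fun i _ => ?_
      simp only [Complex.star_def, _root_.map_mul, map_inv₀, Complex.conj_ofReal]
      field_simp
      try rw [mul_div_assoc, mul_div_cancel_left₀ _ (hd0 i)]
      rw [mul_assoc, mul_div_cancel_left₀ _ (hd0 i)]
    have hz : dotProduct (star u) (w - x) = t - β * s := by
      rw [hax, dotProduct_sub, dotProduct_smul, ← htdef, ← hsdef]
      simp [smul_eq_mul]
    have quad : dotProduct (star (w - x)) (W.mulVec (w - x))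
        = dotProduct (star a) (D.mulVec a)
          + (t - β * s - β) * star (t - β * s - β) - (β * star β) * (1 + s) := by
      rw [hax, hW]
      simp only [Matrix.add_mulVec, hvmv, Matrix.mulVec_sub, Matrix.mulVec_smul, hDb,
        dotProduct_sub, dotProduct_smul, sub_dotProduct,
        smul_dotProduct, star_sub, star_smul, dotProduct_add,
        smul_eq_mul, f1, f2, f5, ← htdef, ← hsdef]
      rw [star_mul', hs]
      ring
    have hnormsq : ((t - β * s - β) * star (t - β * s - β)).re
        = Complex.normSq (t - β * s - β) := by
      rw [Complex.star_def, Complex.mul_conj]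
      simp
    simp only [proxObj, hz, quad]
    rw [Complex.sub_re, Complex.add_re, hnormsq]
    ring
  have hzp : dotProduct (star u) (p - x) - β = 0 := by
    have h1 : p - x = -(x - p) := by abel
    rw [h1, dotProduct_neg]
    linear_combination -hβ
  rw [key w, key p, hzp]
  have h1 := hproxD v w
  have h2 : 0 ≤ Complex.normSq (dotProduct (star u) (w - x) - β) :=
    Complex.normSq_nonneg _
  simp only [Complex.normSq_zero]
  linarith
end

section
/- Let D be a real diagonal positive definite matrix, u ∈ ℂᴺ such that W = D − u·uᴴ is positive definite, and h a proper closed convex function. Then the map J(β) = uᴴ(x − prox_{λh}^D(x + D⁻¹u·β)) + β has a unique zero β* ∈ ℂ, and prox_{λh}^W(x) = prox_{λh}^D(x + D⁻¹u·β*). -/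
open scoped ComplexOrder
open Matrix
set_option maxHeartbeats 1000000

section Aux

variable {N : ℕ}

lemma herm_conj (M : Matrix (Fin N) (Fin N) ℂ) (hM : Mᴴ = M) (y z : Fin N → ℂ) :
    star y ⬝ᵥ M *ᵥ z = star (star z ⬝ᵥ M *ᵥ y) := by
  rw [star_dotProduct]
  congr 1
  rw [star_mulVec, hM, ← dotProduct_mulVec]

lemma qre_add (M : Matrix (Fin N) (Fin N) ℂ) (hM : Mᴴ = M) (y z : Fin N → ℂ) :
    (star (y + z) ⬝ᵥ M *ᵥ (y + z)).re
      = (star y ⬝ᵥ M *ᵥ y).re + 2 * (star z ⬝ᵥ M *ᵥ y).re + (star z ⬝ᵥ M *ᵥ z).re := by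
  rw [star_add, add_dotProduct, mulVec_add, dotProduct_add, dotProduct_add]
  rw [herm_conj M hM y z]
  simp [Complex.add_re, Complex.conj_re]
  ring

lemma vecMulVec_mulVec' (a b z : Fin N → ℂ) :
    (vecMulVec a b) *ᵥ z = (b ⬝ᵥ z) • a := by
  ext i
  simp only [mulVec, vecMulVec_apply, dotProduct, Pi.smul_apply, smul_eq_mul, Finset.sum_mul,
    Finset.mul_sum]
  exact Finset.sum_congr rfl fun j _ => by ring

lemma smul_dot_left (β : ℂ) (y z : Fin N → ℂ) :
    star (β • y) ⬝ᵥ z = (starRingEnd ℂ β) * (star y ⬝ᵥ z) := by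
  simp only [star_smul, smul_dotProduct, dotProduct, Finset.mul_sum, Pi.star_apply,
    Pi.smul_apply, smul_eq_mul, star_mul', RCLike.star_def]
  exact Finset.sum_congr rfl fun j _ => by ring

lemma dot_smul_right (β : ℂ) (y z : Fin N → ℂ) :
    y ⬝ᵥ (β • z) = β * (y ⬝ᵥ z) := by
  simp only [dotProduct, Finset.mul_sum, Pi.smul_apply, smul_eq_mul]
  exact Finset.sum_congr rfl fun j _ => by ring

noncomputable def emap (d : Fin N → ℝ) (y : Fin N → ℂ) : EuclideanSpace ℂ (Fin N) :=
  WithLp.toLp 2 (fun i => (Real.sqrt (d i) : ℂ) * y i)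

lemma emap_inner (d : Fin N → ℝ) (hd : ∀ i, 0 < d i) (y z : Fin N → ℂ) :
    inner ℂ (emap d y) (emap d z)
      = star y ⬝ᵥ (Matrix.diagonal fun i => (d i : ℂ)) *ᵥ z := by
  simp only [PiLp.inner_apply, RCLike.inner_apply', emap, PiLp.toLp_apply, dotProduct, mulVec_diagonal,
    Pi.star_apply]
  refine Finset.sum_congr rfl fun i _ => ?_
  rw [_root_.map_mul, Complex.conj_ofReal]
  have h2 : ((Real.sqrt (d i) : ℂ)) * (Real.sqrt (d i) : ℂ) = (d i : ℂ) := by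
    rw [← Complex.ofReal_mul, Real.mul_self_sqrt (hd i).le]
  calc (Real.sqrt (d i) : ℂ) * (starRingEnd ℂ) (y i) * ((Real.sqrt (d i) : ℂ) * z i)
      = ((Real.sqrt (d i) : ℂ) * (Real.sqrt (d i) : ℂ)) * ((starRingEnd ℂ) (y i) * z i) := by
        ring
    _ = star (y i) * ((d i : ℂ) * z i) := by rw [h2]; rw [RCLike.star_def]; ring

lemma emap_sub (d : Fin N → ℝ) (y z : Fin N → ℂ) :
    emap d (y - z) = emap d y - emap d z := by
  ext i; simp [emap]; ring

lemma emap_smul (d : Fin N → ℝ) (β : ℂ) (y : Fin N → ℂ) :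
    emap d (β • y) = β • emap d y := by
  ext i; simp [emap]; ring

end Aux

/-- Becker's theorem (here with `W = D − uuᴴ` positive definite): the map
`J(β) = uᴴ(x − prox_{λh}^D(x + D⁻¹uβ)) + β` has a unique zero `β*`, and
`prox_{λh}^W(x) = prox_{λh}^D(x + D⁻¹uβ*)`. -/
theorem stmt_6 {N : ℕ} (d : Fin N → ℝ) (hd : ∀ i, 0 < d i)
    (u x : Fin N → ℂ) (lam : ℝ) (hlam : 0 < lam)
    (h : (Fin N → ℂ) → ℝ) (hconv : ConvexOn ℝ Set.univ h)
    (hlsc : LowerSemicontinuous h)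
    (D : Matrix (Fin N) (Fin N) ℂ) (hD : D = Matrix.diagonal fun i => (d i : ℂ))
    (W : Matrix (Fin N) (Fin N) ℂ) (hW : W = D - Matrix.vecMulVec u (star u))
    (hWpd : W.PosDef)
    (proxD : (Fin N → ℂ) → (Fin N → ℂ))
    (hproxDmin : ∀ v w, proxObj D lam h v (proxD v) ≤ proxObj D lam h v w)
    (hproxDuniq : ∀ v w, (∀ w', proxObj D lam h v w ≤ proxObj D lam h v w') →
      w = proxD v) :
    (∃! β : ℂ,
        dotProduct (star u) (x - proxD (x + β • D⁻¹.mulVec u)) + β = 0) ∧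
      ∀ β : ℂ,
        dotProduct (star u) (x - proxD (x + β • D⁻¹.mulVec u)) + β = 0 →
        ∀ w, proxObj W lam h x (proxD (x + β • D⁻¹.mulVec u)) ≤ proxObj W lam h x w := by
  classical
  set u' : Fin N → ℂ := D⁻¹.mulVec u with hu'
  have hDherm : Dᴴ = D := by
    rw [hD]
    ext i j
    by_cases hij : i = j
    · subst hij; simp [Matrix.conjTranspose_apply, Complex.conj_ofReal]
    · simp [Matrix.conjTranspose_apply, Matrix.diagonal_apply_ne, hij, Ne.symm hij]
  have hdet : IsUnit D.det := by
    rw [hD, Matrix.det_diagonal]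
    refine isUnit_iff_ne_zero.2 (Finset.prod_ne_zero_iff.2 fun i _ => ?_)
    exact_mod_cast (hd i).ne'
  have hDu' : D *ᵥ u' = u := by
    rw [hu', Matrix.mulVec_mulVec, Matrix.mul_nonsing_inv D hdet, Matrix.one_mulVec]
  set T : (Fin N → ℂ) → ℂ := fun z => star u ⬝ᵥ z with hTdef
  set qD : (Fin N → ℂ) → ℝ := fun z => (star z ⬝ᵥ D *ᵥ z).re with hqDdef
  set qW : (Fin N → ℂ) → ℝ := fun z => (star z ⬝ᵥ W *ᵥ z).re with hqWdef
  set e : (Fin N → ℂ) → EuclideanSpace ℂ (Fin N) := emap d with hedef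
  have hED : ∀ y z, star y ⬝ᵥ D *ᵥ z = inner ℂ (e y) (e z) := by
    intro y z; rw [hedef, emap_inner d hd, ← hD]
  have hqDe : ∀ z, qD z = ‖e z‖ ^ 2 := by
    intro z
    rw [hqDdef]
    simp only
    rw [hED, inner_self_eq_norm_sq_to_K (𝕜 := ℂ)]
    norm_cast
  have hTdual : ∀ y, star u' ⬝ᵥ D *ᵥ y = T y := by
    intro y
    rw [herm_conj D hDherm u' y, hDu', star_dotProduct, star_star, hTdef]
  have hTinner : ∀ z, T z = inner ℂ (e u') (e z) := by
    intro z; rw [← hTdual, hED]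
  set a : ℝ := ‖e u'‖ ^ 2 with hadef
  have ha0 : 0 ≤ a := sq_nonneg _
  have hα : star u' ⬝ᵥ u = (a : ℂ) := by
    rw [← hDu', hED, inner_self_eq_norm_sq_to_K (𝕜 := ℂ), hadef]
    norm_cast
  have hTu' : T u' = (a : ℂ) := by
    rw [← hTdual, hED, inner_self_eq_norm_sq_to_K (𝕜 := ℂ), hadef]
    norm_cast
  have hqWq : ∀ z, qW z = qD z - Complex.normSq (T z) := by
    intro z
    have hsz : star z ⬝ᵥ u = star (star u ⬝ᵥ z) := star_dotProduct z u
    show (star z ⬝ᵥ W *ᵥ z).re = (star z ⬝ᵥ D *ᵥ z).re - Complex.normSq (star u ⬝ᵥ z)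
    rw [hW, Matrix.sub_mulVec, dotProduct_sub, vecMulVec_mulVec', dot_smul_right, hsz,
      RCLike.star_def, Complex.mul_conj]
    simp [Complex.sub_re, Complex.ofReal_re]
  have hqWpos : ∀ z, z ≠ 0 → 0 < qW z := by
    intro z hz
    have := hWpd.dotProduct_mulVec_pos hz
    rw [Complex.lt_def] at this
    simpa [hqWdef] using this.1
  have hqW0 : ∀ z, 0 ≤ qW z := by
    intro z
    by_cases hz : z = 0
    · subst hz; simp [hqWdef]
    · exact (hqWpos z hz).le
  have ha1 : a < 1 := by
    by_cases hu0 : u' = 0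
    · rw [hadef, hu0]
      have h0 : e 0 = 0 := by ext i; simp [hedef, emap]
      rw [h0]; simp
    · have h1 := hqWpos u' hu0
      rw [hqWq, hTu'] at h1
      have h2 : qD u' = a := hqDe u'
      rw [h2, Complex.normSq_ofReal] at h1
      nlinarith
  -- key identity
  have key : ∀ (β : ℂ) (w : Fin N → ℂ),
      proxObj D lam h (x + β • u') w
        = proxObj W lam h x w + (1 / 2) * Complex.normSq (T (w - x) - β)
            + (1 / 2) * (a - 1) * Complex.normSq β := by
    intro β w
    have hvec : w - (x + β • u') = (w - x) + (-β) • u' := by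
      funext i
      simp only [Pi.sub_apply, Pi.add_apply, Pi.smul_apply, smul_eq_mul, neg_mul]
      ring
    have hcross : star ((-β) • u') ⬝ᵥ D *ᵥ (w - x)
        = (starRingEnd ℂ) (-β) * T (w - x) := by
      rw [smul_dot_left, hTdual]
    have hquad : star ((-β) • u') ⬝ᵥ D *ᵥ ((-β) • u')
        = (starRingEnd ℂ) (-β) * ((-β) * (a : ℂ)) := by
      rw [smul_dot_left, Matrix.mulVec_smul, hDu', dot_smul_right, hα]
    have hqWz : (star (w - x) ⬝ᵥ W *ᵥ (w - x)).re
        = (star (w - x) ⬝ᵥ D *ᵥ (w - x)).re - Complex.normSq (T (w - x)) :=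
      hqWq (w - x)
    show lam * h w + (1 / 2) * (star (w - (x + β • u')) ⬝ᵥ D *ᵥ (w - (x + β • u'))).re
        = lam * h w + (1 / 2) * (star (w - x) ⬝ᵥ W *ᵥ (w - x)).re
            + (1 / 2) * Complex.normSq (T (w - x) - β) + (1 / 2) * (a - 1) * Complex.normSq β
    rw [hvec, qre_add D hDherm, hcross, hquad, hqWz]
    simp only [Complex.mul_re, Complex.mul_im, Complex.conj_re, Complex.conj_im,
      Complex.neg_re, Complex.neg_im, Complex.ofReal_re, Complex.ofReal_im,
      Complex.normSq_apply, Complex.sub_re, Complex.sub_im]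
    ring
  -- strong convexity inequality for the D-prox
  have strong : ∀ v w, proxObj D lam h v (proxD v) + (1 / 2) * qD (w - proxD v)
      ≤ proxObj D lam h v w := by
    intro v w
    have hobj : ∀ y z, proxObj D lam h y z
        = lam * h z + (1 / 2) * (star (z - y) ⬝ᵥ D *ᵥ (z - y)).re := fun y z => rfl
    have hq : ∀ y, qD y = (star y ⬝ᵥ D *ᵥ y).re := fun y => rfl
    refine le_of_forall_pos_le_add fun ε hε => ?_
    set p : Fin N → ℂ := proxD v with hp
    set Q : ℝ := qD (w - p) with hQ
    have hQ0 : 0 ≤ Q := by rw [hQ, hqDe]; positivity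
    set θ : ℝ := min (1 / 2) (ε / (Q + 1)) with hθ
    have hθ0 : 0 < θ := lt_min (by norm_num) (div_pos hε (by linarith))
    have hθ1 : θ ≤ 1 / 2 := min_le_left _ _
    have hθε : θ * Q ≤ ε := by
      calc θ * Q ≤ (ε / (Q + 1)) * Q :=
            mul_le_mul_of_nonneg_right (min_le_right _ _) hQ0
        _ ≤ ε := by
            rw [div_mul_eq_mul_div, div_le_iff₀ (by linarith : (0:ℝ) < Q + 1)]
            nlinarith
    have hmem := hconv.2 (Set.mem_univ p) (Set.mem_univ w)
      (by linarith : (0:ℝ) ≤ 1 - θ) hθ0.le (by ring)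
    have hmin := hproxDmin v ((1 - θ) • p + θ • w)
    rw [hobj, hobj] at hmin
    have hvec1 : (1 - θ) • p + θ • w - v = (p - v) + ((θ : ℂ)) • (w - p) := by
      funext i
      simp only [Pi.sub_apply, Pi.add_apply, Pi.smul_apply, smul_eq_mul, Complex.real_smul]
      push_cast
      ring
    have hvec2 : w - v = (p - v) + ((1 : ℂ)) • (w - p) := by
      funext i
      simp only [Pi.sub_apply, Pi.add_apply, Pi.smul_apply, smul_eq_mul, one_mul]
      ring
    set Cre : ℝ := (star (w - p) ⬝ᵥ D *ᵥ (p - v)).re with hCre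
    have e1 : (star ((1 - θ) • p + θ • w - v) ⬝ᵥ D *ᵥ ((1 - θ) • p + θ • w - v)).re
        = (star (p - v) ⬝ᵥ D *ᵥ (p - v)).re + 2 * (θ * Cre) + θ ^ 2 * Q := by
      rw [hvec1, qre_add D hDherm, smul_dot_left, Matrix.mulVec_smul, dot_smul_right,
        smul_dot_left]
      have hQ2 : Q = (star (w - p) ⬝ᵥ D *ᵥ (w - p)).re := rfl
      rw [hQ2, hCre]
      simp only [Complex.mul_re, Complex.mul_im, Complex.conj_re, Complex.conj_im,
        Complex.ofReal_re, Complex.ofReal_im]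
      ring
    have e2 : (star (w - v) ⬝ᵥ D *ᵥ (w - v)).re
        = (star (p - v) ⬝ᵥ D *ᵥ (p - v)).re + 2 * Cre + Q := by
      rw [hvec2, qre_add D hDherm, smul_dot_left, Matrix.mulVec_smul, dot_smul_right,
        smul_dot_left]
      have hQ2 : Q = (star (w - p) ⬝ᵥ D *ᵥ (w - p)).re := rfl
      rw [hQ2, hCre]
      simp only [_root_.map_one, one_mul]
    rw [hobj, hobj, e2]
    rw [e1] at hmin
    set A : ℝ := (star (p - v) ⬝ᵥ D *ᵥ (p - v)).re with hA
    set HM : ℝ := h ((1 - θ) • p + θ • w) with hHM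
    have hmem' : lam * HM ≤ lam * ((1 - θ) * h p + θ * h w) :=
      mul_le_mul_of_nonneg_left hmem hlam.le
    have h9 : 0 ≤ θ * (lam * h w + Cre + θ * Q / 2 - lam * h p) := by nlinarith [hmin, hmem']
    have hdiv2 : 0 ≤ lam * h w + Cre + θ * Q / 2 - lam * h p :=
      nonneg_of_mul_nonneg_right h9 hθ0
    have hQε : θ * Q / 2 ≤ ε := by linarith
    linarith
  -- the fixed point function
  set φ : ℂ → ℂ := fun β => T (proxD (x + β • u') - x) with hφdef
  have hJiff : ∀ β : ℂ,
      (dotProduct (star u) (x - proxD (x + β • D⁻¹.mulVec u)) + β = 0) ↔ φ β = β := by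
    intro β
    have hsplit : T (proxD (x + β • u') - x)
        = - (star u ⬝ᵥ (x - proxD (x + β • u'))) := by
      rw [hTdef]
      simp only [dotProduct_sub]
      ring
    rw [hφdef]
    simp only
    rw [hsplit, ← hu']
    constructor
    · intro hb; linear_combination -hb
    · intro hb; linear_combination -hb
  -- nonexpansiveness and contraction
  have hlip : ∀ β γ : ℂ, ‖φ β - φ γ‖ ≤ a * ‖β - γ‖ := by
    intro β γ
    set v1 : Fin N → ℂ := x + β • u' with hv1
    set v2 : Fin N → ℂ := x + γ • u' with hv2
    set p1 : Fin N → ℂ := proxD v1 with hp1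
    set p2 : Fin N → ℂ := proxD v2 with hp2
    have s1 := strong v1 p2
    have s2 := strong v2 p1
    have hobj : ∀ y z, proxObj D lam h y z
        = lam * h z + (1 / 2) * qD (z - y) := fun y z => rfl
    rw [hobj, hobj] at s1 s2
    have hqflip : qD (p2 - p1) = qD (p1 - p2) := by
      rw [hqDe, hqDe]
      have : e (p2 - p1) = - e (p1 - p2) := by
        ext i; simp [hedef, emap]; ring
      rw [this, norm_neg]
    rw [hqflip] at s1
    have hsum : qD (p1 - p2)
        ≤ (1 / 2) * (qD (p2 - v1) - qD (p2 - v2) + qD (p1 - v2) - qD (p1 - v1)) := by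
      linarith
    -- pass to the Euclidean picture
    have hnorm : ∀ y z : Fin N → ℂ, qD (y - z) = ‖e y - e z‖ ^ 2 := by
      intro y z
      rw [hqDe]
      congr 1
      rw [hedef, emap_sub]
    have hexp : ∀ X Y : EuclideanSpace ℂ (Fin N),
        ‖X - Y‖ ^ 2 = ‖X‖ ^ 2 - 2 * (inner ℂ X Y).re + ‖Y‖ ^ 2 := by
      intro X Y
      have := @norm_sub_sq ℂ _ _ _ _ X Y
      simpa using this
    rw [hnorm, hnorm, hnorm, hnorm, hnorm] at hsum
    rw [hexp, hexp, hexp, hexp, hexp] at hsum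
    -- Cauchy-Schwarz step
    set n : ℝ := ‖e p1 - e p2‖ with hn
    set m : ℝ := ‖e v1 - e v2‖ with hm
    have hcs : (inner ℂ (e v2 - e v1) (e p2 - e p1)).re ≤ m * n := by
      have h1 : (inner ℂ (e v2 - e v1) (e p2 - e p1)).re
          ≤ ‖(inner ℂ (e v2 - e v1) (e p2 - e p1))‖ := Complex.re_le_norm _
      have h2 : ‖(inner ℂ (e v2 - e v1) (e p2 - e p1))‖
          ≤ ‖e v2 - e v1‖ * ‖e p2 - e p1‖ := norm_inner_le_norm _ _
      have h3 : ‖e v2 - e v1‖ = m := by rw [hm, norm_sub_rev]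
      have h4 : ‖e p2 - e p1‖ = n := by rw [hn, norm_sub_rev]
      rw [h3, h4] at h2
      linarith
    have hinner_expand : (inner ℂ (e v2 - e v1) (e p2 - e p1)).re
        = (inner ℂ (e v2) (e p2)).re - (inner ℂ (e v2) (e p1)).re
          - (inner ℂ (e v1) (e p2)).re + (inner ℂ (e v1) (e p1)).re := by
      rw [inner_sub_left, inner_sub_right, inner_sub_right]
      simp only [Complex.sub_re]
      ring
    have hsym : ∀ X Y : EuclideanSpace ℂ (Fin N),
        (inner ℂ X Y).re = (inner ℂ Y X).re := by
      intro X Y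
      rw [← inner_conj_symm X Y]
      exact Complex.conj_re _
    have hkey : n ^ 2 ≤ (inner ℂ (e v2 - e v1) (e p2 - e p1)).re := by
      rw [hinner_expand]
      rw [hsym (e v2) (e p2), hsym (e v2) (e p1), hsym (e v1) (e p2), hsym (e v1) (e p1)]
      have hn2 : n ^ 2 = ‖e p1 - e p2‖ ^ 2 := by rw [hn]
      rw [hn2, hexp]
      linarith
    have hnm : n ≤ m := by
      have hn0 : 0 ≤ n := norm_nonneg _
      have hm0 : 0 ≤ m := norm_nonneg _
      nlinarith [hkey, hcs]
    -- bound the difference of φ values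
    have hφsub : φ β - φ γ = T (p1 - p2) := by
      rw [hφdef]
      simp only [hTdef, ← hp1, ← hp2, ← hv1, ← hv2]
      rw [← dotProduct_sub]
      congr 1
      funext i
      simp only [Pi.sub_apply]
      ring
    have hTb : ‖T (p1 - p2)‖ ≤ ‖e u'‖ * n := by
      have h6 : e (p1 - p2) = e p1 - e p2 := by rw [hedef, emap_sub]
      rw [hTinner, h6, hn]
      exact norm_inner_le_norm _ _
    have hvsub : e v1 - e v2 = (β - γ) • e u' := by
      have h7 : v1 - v2 = (β - γ) • u' := by
        funext i
        simp only [hv1, hv2, Pi.sub_apply, Pi.add_apply, Pi.smul_apply, smul_eq_mul]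
        ring
      calc e v1 - e v2 = e (v1 - v2) := by rw [hedef, emap_sub]
        _ = e ((β - γ) • u') := by rw [h7]
        _ = (β - γ) • e u' := by rw [hedef, emap_smul]
    have hmval : m = ‖β - γ‖ * ‖e u'‖ := by
      rw [hm, hvsub, norm_smul]
    calc ‖φ β - φ γ‖ = ‖T (p1 - p2)‖ := by rw [hφsub]
      _ ≤ ‖e u'‖ * n := hTb
      _ ≤ ‖e u'‖ * m := by
          apply mul_le_mul_of_nonneg_left hnm (norm_nonneg _)
      _ = a * ‖β - γ‖ := by rw [hmval, hadef]; ring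
  -- part 2
  have part2 : ∀ β : ℂ, φ β = β →
      ∀ w, proxObj W lam h x (proxD (x + β • u')) ≤ proxObj W lam h x w := by
    intro β hβ w
    set v : Fin N → ℂ := x + β • u' with hv
    set p : Fin N → ℂ := proxD v with hp
    have hβ2 : T (p - x) = β := hβ
    have k1 := key β p
    have k2 := key β w
    have s3 := strong v w
    rw [k1, k2] at s3
    rw [hβ2, sub_self, Complex.normSq_zero] at s3
    have hTw : T (w - x) - β = T (w - p) := by
      rw [← hβ2, hTdef]
      simp only
      rw [← dotProduct_sub]
      congr 1
      funext i
      simp only [Pi.sub_apply]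
      ring
    rw [hTw] at s3
    have hfin : Complex.normSq (T (w - p)) ≤ qD (w - p) := by
      have h8 := hqW0 (w - p)
      rw [hqWq] at h8
      linarith
    linarith
  -- existence of fixed point
  have hexists : ∃ β : ℂ, φ β = β := by
    have hlipW : LipschitzWith (Real.toNNReal a) φ :=
      LipschitzWith.of_dist_le_mul fun β γ => by
        rw [Complex.dist_eq, Complex.dist_eq, Real.coe_toNNReal a ha0]
        exact hlip β γ
    have hK1 : Real.toNNReal a < 1 := by
      rw [← Real.toNNReal_one]
      exact (Real.toNNReal_lt_toNNReal_iff one_pos).2 ha1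
    have hcontr : ContractingWith (Real.toNNReal a) φ := ⟨hK1, hlipW⟩
    exact ⟨ContractingWith.fixedPoint φ hcontr, ContractingWith.fixedPoint_isFixedPt hcontr⟩
  obtain ⟨β0, hβ0⟩ := hexists
  refine ⟨⟨β0, (hJiff β0).2 hβ0, ?_⟩, fun β hβ w => part2 β ((hJiff β).1 hβ) w⟩
  intro γ hγ
  have hγ' := (hJiff γ).1 hγ
  have hd1 := hlip γ β0
  rw [hγ', hβ0] at hd1
  have habs : 0 ≤ ‖γ - β0‖ := norm_nonneg _
  have h0 : ‖γ - β0‖ = 0 := by nlinarith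
  have h1 := norm_eq_zero.1 h0
  exact sub_eq_zero.1 h1
end

section
/- For a complex matrix X ∈ ℂ^{I×J} with the zero Neumann boundary convention, the anisotropic total variation satisfies TV_{ℓ1}(X) = max over pairs (P,Q) with P ∈ ℂ^{(I−1)×J}, Q ∈ ℂ^{I×(J−1)}, |P_{i,j}| ≤ 1 and |Q_{i,j}| ≤ 1 for all i,j, of Re⟨L(P,Q), X⟩ = Re{vec(L(P,Q))ᴴ vec(X)}. -/
open scoped ComplexConjugate
open Finset

private noncomputable def phase9 (z : ℂ) : ℂ := z / (‖z‖ : ℂ)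

private lemma phase9_norm_le (z : ℂ) : ‖phase9 z‖ ≤ 1 := by
  rcases eq_or_ne z 0 with rfl | h
  · simp [phase9]
  · have hz : (0:ℝ) < ‖z‖ := norm_pos_iff.mpr h
    simp only [phase9, norm_div, Complex.norm_real, Real.norm_eq_abs, abs_of_pos hz]
    rw [div_self (ne_of_gt (by simpa using hz))]

private lemma conj_phase9_mul (z : ℂ) : conj (phase9 z) * z = (‖z‖ : ℂ) := by
  rcases eq_or_ne z 0 with rfl | h
  · simp [phase9]
  · have hz : (‖z‖ : ℂ) ≠ 0 := by simpa using (norm_ne_zero_iff.mpr h)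
    have hconj : conj z * z = ((‖z‖ : ℂ))^2 := by
      rw [mul_comm, Complex.mul_conj']
    rw [phase9, map_div₀, Complex.conj_ofReal, div_mul_eq_mul_div, hconj]
    field_simp [pow_two]

private lemma oneD9 (n : ℕ) (hn : 1 ≤ n) (p x : ℕ → ℂ)
    (hp : ∀ i, p i ≠ 0 → 1 ≤ i ∧ i ≤ n - 1) :
    ∑ i ∈ Icc 1 n, conj (p i - p (i - 1)) * x i
      = ∑ i ∈ Icc 1 (n - 1), conj (p i) * (x i - x (i + 1)) := by
  have h1 : ∑ i ∈ Icc 1 n, conj (p i) * x i = ∑ i ∈ Icc 1 (n-1), conj (p i) * x i := by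
    rw [Finset.sum_subset (Finset.Icc_subset_Icc_right (Nat.sub_le n 1))]
    intro i hi hni
    simp only [mem_Icc] at hi hni
    have : p i = 0 := by
      by_contra h
      exact absurd ((hp i h).2) (by omega)
    simp [this]
  have h2 : ∑ i ∈ Icc 1 n, conj (p (i - 1)) * x i
      = ∑ i ∈ Icc 1 (n-1), conj (p i) * x (i + 1) := by
    rw [← Finset.sum_subset (show Icc 2 n ⊆ Icc 1 n by apply Finset.Icc_subset_Icc_left; omega)]
    · have hmap : Icc 2 n = (Icc 1 (n-1)).map ⟨fun i => i + 1, add_left_injective 1⟩ := by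
        ext k
        simp only [mem_Icc, mem_map, Function.Embedding.coeFn_mk]
        constructor
        · intro ⟨h2k, hkn⟩; exact ⟨k - 1, by omega, by omega⟩
        · rintro ⟨a, ⟨h1, h2⟩, rfl⟩; omega
      rw [hmap, Finset.sum_map]
      apply Finset.sum_congr rfl
      intro i hi
      simp [Nat.add_sub_cancel]
    · intro i hi hni
      simp only [mem_Icc] at hi hni
      have : i = 1 := by omega
      subst this
      have : p 0 = 0 := by
        by_contra h
        exact absurd (hp 0 h).1 (by omega)
      simp [this]
  calc ∑ i ∈ Icc 1 n, conj (p i - p (i - 1)) * x i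
      = ∑ i ∈ Icc 1 n, (conj (p i) * x i - conj (p (i-1)) * x i) := by
        apply Finset.sum_congr rfl; intro i _; rw [map_sub]; ring
    _ = ∑ i ∈ Icc 1 n, conj (p i) * x i - ∑ i ∈ Icc 1 n, conj (p (i-1)) * x i :=
        Finset.sum_sub_distrib _ _
    _ = ∑ i ∈ Icc 1 (n-1), conj (p i) * x i - ∑ i ∈ Icc 1 (n-1), conj (p i) * x (i+1) := by
        rw [h1, h2]
    _ = _ := by rw [← Finset.sum_sub_distrib]; apply Finset.sum_congr rfl; intro i _; ring

private lemma decomp9 (I J : ℕ) (hI : 1 ≤ I) (hJ : 1 ≤ J) (P Q X : ℕ → ℕ → ℂ)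
    (hP : ∀ i j, P i j ≠ 0 → 1 ≤ i ∧ i ≤ I - 1 ∧ 1 ≤ j ∧ j ≤ J)
    (hQ : ∀ i j, Q i j ≠ 0 → 1 ≤ i ∧ i ≤ I ∧ 1 ≤ j ∧ j ≤ J - 1) :
    (∑ i ∈ Icc 1 I, ∑ j ∈ Icc 1 J,
        conj (P i j + Q i j - P (i - 1) j - Q i (j - 1)) * X i j)
      = (∑ i ∈ Icc 1 (I - 1), ∑ j ∈ Icc 1 J, conj (P i j) * (X i j - X (i + 1) j))
        + ∑ i ∈ Icc 1 I, ∑ j ∈ Icc 1 (J - 1), conj (Q i j) * (X i j - X i (j + 1)) := by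
  have hsplit : ∀ i j, conj (P i j + Q i j - P (i - 1) j - Q i (j - 1)) * X i j
      = conj (P i j - P (i - 1) j) * X i j + conj (Q i j - Q i (j - 1)) * X i j := by
    intro i j
    simp only [map_sub, map_add]
    ring
  calc (∑ i ∈ Icc 1 I, ∑ j ∈ Icc 1 J,
        conj (P i j + Q i j - P (i - 1) j - Q i (j - 1)) * X i j)
      = (∑ i ∈ Icc 1 I, ∑ j ∈ Icc 1 J, conj (P i j - P (i - 1) j) * X i j)
        + ∑ i ∈ Icc 1 I, ∑ j ∈ Icc 1 J, conj (Q i j - Q i (j - 1)) * X i j := by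
        rw [← Finset.sum_add_distrib]
        apply Finset.sum_congr rfl; intro i _
        rw [← Finset.sum_add_distrib]
        exact Finset.sum_congr rfl fun j _ => hsplit i j
    _ = _ := by
        congr 1
        · rw [Finset.sum_comm]
          rw [show (∑ i ∈ Icc 1 (I-1), ∑ j ∈ Icc 1 J, conj (P i j) * (X i j - X (i+1) j))
              = ∑ j ∈ Icc 1 J, ∑ i ∈ Icc 1 (I-1), conj (P i j) * (X i j - X (i+1) j)
            from Finset.sum_comm]
          apply Finset.sum_congr rfl
          intro j _
          exact oneD9 I hI (fun i => P i j) (fun i => X i j)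
            (fun i h => ⟨(hP i j h).1, (hP i j h).2.1⟩)
        · apply Finset.sum_congr rfl
          intro i _
          exact oneD9 J hJ (fun j => Q i j) (fun j => X i j)
            (fun j h => ⟨(hQ i j h).2.2.1, (hQ i j h).2.2.2⟩)

private lemma ranges9 (I J : ℕ) (hI : 1 ≤ I) (hJ : 1 ≤ J) (v h : ℕ → ℕ → ℝ) :
    (∑ i ∈ Icc 1 (I-1), ∑ j ∈ Icc 1 J, v i j)
      + (∑ i ∈ Icc 1 I, ∑ j ∈ Icc 1 (J-1), h i j)
    = (∑ i ∈ Icc 1 (I-1), ∑ j ∈ Icc 1 (J-1), (v i j + h i j))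
      + (∑ i ∈ Icc 1 (I-1), v i J) + ∑ j ∈ Icc 1 (J-1), h I j := by
  have hJsplit : ∀ f : ℕ → ℝ, ∑ j ∈ Icc 1 J, f j = (∑ j ∈ Icc 1 (J-1), f j) + f J := by
    intro f
    conv_lhs => rw [show J = (J-1) + 1 by omega]
    rw [Finset.sum_Icc_succ_top (by omega)]
    rw [show (J-1) + 1 = J by omega]
  have hIsplit : ∀ f : ℕ → ℝ, ∑ i ∈ Icc 1 I, f i = (∑ i ∈ Icc 1 (I-1), f i) + f I := by
    intro f
    conv_lhs => rw [show I = (I-1) + 1 by omega]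
    rw [Finset.sum_Icc_succ_top (by omega)]
    rw [show (I-1) + 1 = I by omega]
  rw [hIsplit (fun i => ∑ j ∈ Icc 1 (J-1), h i j)]
  calc (∑ i ∈ Icc 1 (I-1), ∑ j ∈ Icc 1 J, v i j)
      + ((∑ i ∈ Icc 1 (I-1), ∑ j ∈ Icc 1 (J-1), h i j) + ∑ j ∈ Icc 1 (J-1), h I j)
      = (∑ i ∈ Icc 1 (I-1), ((∑ j ∈ Icc 1 (J-1), v i j) + v i J))
        + ((∑ i ∈ Icc 1 (I-1), ∑ j ∈ Icc 1 (J-1), h i j) + ∑ j ∈ Icc 1 (J-1), h I j) := by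
        rw [Finset.sum_congr rfl fun i _ => hJsplit (v i)]
    _ = _ := by
        rw [Finset.sum_add_distrib]
        rw [show (∑ i ∈ Icc 1 (I-1), ∑ j ∈ Icc 1 (J-1), (v i j + h i j))
            = (∑ i ∈ Icc 1 (I-1), ∑ j ∈ Icc 1 (J-1), v i j)
              + ∑ i ∈ Icc 1 (I-1), ∑ j ∈ Icc 1 (J-1), h i j by
          rw [← Finset.sum_add_distrib]
          exact Finset.sum_congr rfl fun i _ => Finset.sum_add_distrib]
        ring

/-- Dual characterization of the anisotropic total variation: `TV_{ℓ1}(X)` equals the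
maximum of `Re⟨L(P,Q), X⟩ = Re{vec(L(P,Q))ᴴ vec(X)}` over pairs `(P,Q)` with all
entries of modulus at most `1` (and the zero boundary conventions), where
`L(P,Q)_{i,j} = P_{i,j} + Q_{i,j} − P_{i−1,j} − Q_{i,j−1}` (1-based indexing). -/
theorem stmt_9 (I J : ℕ) (hI : 1 ≤ I) (hJ : 1 ≤ J) (X : ℕ → ℕ → ℂ) :
    IsGreatest
      {r : ℝ | ∃ P Q : ℕ → ℕ → ℂ,
        (∀ i j, P i j ≠ 0 → 1 ≤ i ∧ i ≤ I - 1 ∧ 1 ≤ j ∧ j ≤ J) ∧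
        (∀ i j, Q i j ≠ 0 → 1 ≤ i ∧ i ≤ I ∧ 1 ≤ j ∧ j ≤ J - 1) ∧
        (∀ i j, ‖P i j‖ ≤ 1) ∧ (∀ i j, ‖Q i j‖ ≤ 1) ∧
        r = (∑ i ∈ Finset.Icc 1 I, ∑ j ∈ Finset.Icc 1 J,
              conj (P i j + Q i j - P (i - 1) j - Q i (j - 1)) * X i j).re}
      ((∑ i ∈ Finset.Icc 1 (I - 1), ∑ j ∈ Finset.Icc 1 (J - 1),
          (‖X i j - X (i + 1) j‖ + ‖X i j - X i (j + 1)‖)) +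
        (∑ i ∈ Finset.Icc 1 (I - 1), ‖X i J - X (i + 1) J‖) +
        ∑ j ∈ Finset.Icc 1 (J - 1), ‖X I j - X I (j + 1)‖) := by
  set v : ℕ → ℕ → ℝ := fun i j => ‖X i j - X (i + 1) j‖ with hv
  set h : ℕ → ℕ → ℝ := fun i j => ‖X i j - X i (j + 1)‖ with hh
  have hkey : (∑ i ∈ Icc 1 (I-1), ∑ j ∈ Icc 1 J, v i j)
      + (∑ i ∈ Icc 1 I, ∑ j ∈ Icc 1 (J-1), h i j)
    = (∑ i ∈ Finset.Icc 1 (I - 1), ∑ j ∈ Finset.Icc 1 (J - 1),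
          (‖X i j - X (i + 1) j‖ + ‖X i j - X i (j + 1)‖)) +
        (∑ i ∈ Finset.Icc 1 (I - 1), ‖X i J - X (i + 1) J‖) +
        ∑ j ∈ Finset.Icc 1 (J - 1), ‖X I j - X I (j + 1)‖ := ranges9 I J hI hJ v h
  constructor
  · -- membership
    refine ⟨fun i j => if 1 ≤ i ∧ i ≤ I - 1 ∧ 1 ≤ j ∧ j ≤ J then phase9 (X i j - X (i+1) j) else 0,
      fun i j => if 1 ≤ i ∧ i ≤ I ∧ 1 ≤ j ∧ j ≤ J - 1 then phase9 (X i j - X i (j+1)) else 0,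
      ?_, ?_, ?_, ?_, ?_⟩
    · intro i j hne
      by_contra hc
      exact hne (if_neg hc)
    · intro i j hne
      by_contra hc
      exact hne (if_neg hc)
    · intro i j
      dsimp only
      split
      · exact phase9_norm_le _
      · norm_num
    · intro i j
      dsimp only
      split
      · exact phase9_norm_le _
      · norm_num
    · rw [decomp9 I J hI hJ _ _ X
        (fun i j hne => by by_contra hc; exact hne (if_neg hc))
        (fun i j hne => by by_contra hc; exact hne (if_neg hc))]
      have eP : (∑ i ∈ Icc 1 (I-1), ∑ j ∈ Icc 1 J,
          conj ((if 1 ≤ i ∧ i ≤ I - 1 ∧ 1 ≤ j ∧ j ≤ J then phase9 (X i j - X (i+1) j) else 0))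
            * (X i j - X (i + 1) j))
          = ((∑ i ∈ Icc 1 (I-1), ∑ j ∈ Icc 1 J, v i j : ℝ) : ℂ) := by
        push_cast
        apply Finset.sum_congr rfl
        intro i hi
        apply Finset.sum_congr rfl
        intro j hj
        simp only [mem_Icc] at hi hj
        rw [if_pos ⟨hi.1, hi.2, hj.1, hj.2⟩, conj_phase9_mul]
      have eQ : (∑ i ∈ Icc 1 I, ∑ j ∈ Icc 1 (J-1),
          conj ((if 1 ≤ i ∧ i ≤ I ∧ 1 ≤ j ∧ j ≤ J - 1 then phase9 (X i j - X i (j+1)) else 0))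
            * (X i j - X i (j + 1)))
          = ((∑ i ∈ Icc 1 I, ∑ j ∈ Icc 1 (J-1), h i j : ℝ) : ℂ) := by
        push_cast
        apply Finset.sum_congr rfl
        intro i hi
        apply Finset.sum_congr rfl
        intro j hj
        simp only [mem_Icc] at hi hj
        rw [if_pos ⟨hi.1, hi.2, hj.1, hj.2⟩, conj_phase9_mul]
      rw [← hkey, eP, eQ]
      rw [← Complex.ofReal_add, Complex.ofReal_re]
  · -- upper bound
    rintro r ⟨P, Q, hP, hQ, hPn, hQn, rfl⟩
    rw [decomp9 I J hI hJ P Q X hP hQ, ← hkey, Complex.add_re]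
    have bnd : ∀ (s t : Finset ℕ) (p w : ℕ → ℕ → ℂ) (hpn : ∀ i j, ‖p i j‖ ≤ 1),
        (∑ i ∈ s, ∑ j ∈ t, conj (p i j) * w i j).re ≤ ∑ i ∈ s, ∑ j ∈ t, ‖w i j‖ := by
      intro s t p w hpn
      rw [Complex.re_sum]
      apply Finset.sum_le_sum
      intro i _
      rw [Complex.re_sum]
      apply Finset.sum_le_sum
      intro j _
      calc (conj (p i j) * w i j).re ≤ ‖conj (p i j) * w i j‖ :=
            Complex.re_le_norm _
        _ = ‖p i j‖ * ‖w i j‖ := by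
            rw [norm_mul, RCLike.norm_conj]
        _ ≤ 1 * ‖w i j‖ := by
            apply mul_le_mul_of_nonneg_right (hpn i j) (norm_nonneg _)
        _ = ‖w i j‖ := one_mul _
    exact add_le_add (bnd _ _ P _ hPn) (bnd _ _ Q _ hQn)
end

section
/- Let B be Hermitian positive definite, v ∈ ℂᴺ, λ̄ > 0, and h a convex function expressible as h(x) = max_{d ∈ D} Re⟨c(d), x⟩ over a compact convex set D with c linear. Then the minimizer of F(x) = ‖x − v‖²_B + 2λ̄ h(x) equals x* = v − λ̄ B⁻¹ c(d*) where d* minimizes ‖v − λ̄ B⁻¹ c(d)‖²_B over d ∈ D. -/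
lemma aux_nonneg_lin {α β : ℝ} (hβ : 0 ≤ β)
    (h : ∀ t : ℝ, 0 ≤ t → t ≤ 1 → 0 ≤ t * α + t ^ 2 * β) : 0 ≤ α := by
  by_contra hα
  push_neg at hα
  have hβ1 : 0 < β + 1 := by linarith
  set t := min 1 (-α / (β + 1)) with ht
  have ht0 : 0 < t := lt_min one_pos (div_pos (by linarith) hβ1)
  have ht1 : t ≤ 1 := min_le_left _ _
  have h2 : t ≤ -α / (β + 1) := min_le_right _ _
  have h5 := h t ht0.le ht1
  have h4 : t * β ≤ (-α / (β + 1)) * β := mul_le_mul_of_nonneg_right h2 hβ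
  have h6 : (-α / (β + 1)) * β < -α := by
    rw [div_mul_eq_mul_div, div_lt_iff₀ hβ1]
    nlinarith
  nlinarith

lemma aux_smul_left {E : Type*} [NormedAddCommGroup E] [InnerProductSpace ℂ E]
    (r : ℝ) (x y : E) : (inner ℂ (r • x) y) = (r : ℂ) * inner ℂ x y := by
  rw [← algebraMap_smul ℂ r x, inner_smul_left]
  simp [Complex.conj_ofReal]

lemma aux_smul_right {E : Type*} [NormedAddCommGroup E] [InnerProductSpace ℂ E]
    (r : ℝ) (x y : E) : (inner ℂ x (r • y)) = (r : ℂ) * inner ℂ x y := by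
  rw [← algebraMap_smul ℂ r y, inner_smul_right]
  simp

lemma aux_re_symm {E : Type*} [NormedAddCommGroup E] [InnerProductSpace ℂ E] (x y : E) :
    (inner ℂ x y).re = (inner ℂ y x).re := by
  rw [← inner_conj_symm x y, Complex.conj_re]

lemma aux_quad {E : Type*} [NormedAddCommGroup E] [InnerProductSpace ℂ E]
    (B : E →L[ℂ] E) (hsym : ∀ a b : E, (inner ℂ (B a) b) = inner ℂ a (B b))
    (a b : E) (s : ℝ) :
    (inner (𝕜 := ℂ) (B (a + s • b)) (a + s • b)).re
      = (inner (𝕜 := ℂ) (B a) a).re + 2 * s * (inner (𝕜 := ℂ) (B a) b).re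
        + s ^ 2 * (inner (𝕜 := ℂ) (B b) b).re := by
  have hmap : B (a + s • b) = B a + s • B b := by
    rw [map_add, ContinuousLinearMap.map_smul_of_tower]
  have hsw : (inner (𝕜 := ℂ) (B b) a).re = (inner (𝕜 := ℂ) (B a) b).re := by
    rw [hsym b a, aux_re_symm]
  rw [hmap]
  simp only [inner_add_left, inner_add_right, aux_smul_left, aux_smul_right,
    Complex.add_re, Complex.mul_re, Complex.ofReal_re, Complex.ofReal_im]
  rw [hsw]
  ring

/-- Abstract dual formulation underlying Proposition 1: for `B` Hermitian positive
definite with inverse `Binv`, `v ∈ ℂᴺ`, `λ̄ > 0`, and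
`h(x) = max_{d ∈ D} Re⟨c(d), x⟩` over a nonempty compact convex set `D` with `c`
(real-)linear and continuous, the minimizer of `F(x) = ‖x − v‖²_B + 2λ̄ h(x)` is
`x* = v − λ̄ B⁻¹ c(d*)`, where `d*` minimizes `‖v − λ̄ B⁻¹ c(d)‖²_B` over `d ∈ D`. -/
theorem stmt_12 {N : ℕ} {G : Type*} [NormedAddCommGroup G] [NormedSpace ℝ G]
    (D : Set G) (hDc : IsCompact D) (hDconv : Convex ℝ D) (hDne : D.Nonempty)
    (c : G →L[ℝ] EuclideanSpace ℂ (Fin N))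
    (B Binv : EuclideanSpace ℂ (Fin N) →L[ℂ] EuclideanSpace ℂ (Fin N))
    (hB : IsSelfAdjoint B)
    (hBpos : ∀ q : EuclideanSpace ℂ (Fin N), q ≠ 0 → 0 < (@inner ℂ _ _ (B q) q).re)
    (hBinv : ∀ q, Binv (B q) = q ∧ B (Binv q) = q)
    (v : EuclideanSpace ℂ (Fin N)) (lam : ℝ) (hlam : 0 < lam)
    (h : EuclideanSpace ℂ (Fin N) → ℝ)
    (hh : ∀ x, IsGreatest {r : ℝ | ∃ d ∈ D, r = (@inner ℂ _ _ (c d) x).re} (h x))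
    (dstar : G) (hdstar : dstar ∈ D)
    (hdmin : ∀ d ∈ D,
      (@inner ℂ _ _ (B (v - lam • Binv (c dstar))) (v - lam • Binv (c dstar))).re ≤
        (@inner ℂ _ _ (B (v - lam • Binv (c d))) (v - lam • Binv (c d))).re) :
    ∀ x : EuclideanSpace ℂ (Fin N),
      (@inner ℂ _ _ (B (v - lam • Binv (c dstar) - v)) (v - lam • Binv (c dstar) - v)).re +
          2 * lam * h (v - lam • Binv (c dstar)) ≤
        (@inner ℂ _ _ (B (x - v)) (x - v)).re + 2 * lam * h x := by
  intro x
  set us := c dstar with hus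
  set xs := v - lam • Binv us with hxs
  have hsym : ∀ a b : EuclideanSpace ℂ (Fin N),
      (inner ℂ (B a) b) = inner ℂ a (B b) := fun a b => hB.isSymmetric a b
  have hQ0 : ∀ q : EuclideanSpace ℂ (Fin N), 0 ≤ (inner (𝕜 := ℂ) (B q) q).re := by
    intro q
    rcases eq_or_ne q 0 with rfl | hq
    · simp
    · exact (hBpos q hq).le
  have hBB : ∀ z u : EuclideanSpace ℂ (Fin N),
      (inner (𝕜 := ℂ) (B z) (Binv u)) = inner ℂ z u := by
    intro z u
    rw [hsym, (hBinv u).2]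
  -- key: d* achieves the max defining h at xs
  have key : ∀ d ∈ D, (inner (𝕜 := ℂ) (c d) xs).re ≤ (inner (𝕜 := ℂ) us xs).re := by
    intro d hd
    set w := c d - us with hw
    set b := -(lam • Binv w) with hb2
    have hα : 0 ≤ 2 * (inner (𝕜 := ℂ) (B xs) b).re := by
      apply aux_nonneg_lin (hQ0 b)
      intro t ht0 ht1
      have hmem : dstar + t • (d - dstar) ∈ D := by
        have h7 := hDconv hdstar hd (by linarith : (0:ℝ) ≤ 1 - t) ht0 (by ring)
        have h8 : (1 - t) • dstar + t • d = dstar + t • (d - dstar) := by module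
        rwa [h8] at h7
      have hpt : v - lam • Binv (c (dstar + t • (d - dstar))) = xs + t • b := by
        have h9 : c (dstar + t • (d - dstar)) = us + t • w := by
          rw [hw]; rw [map_add, ContinuousLinearMap.map_smul, map_sub, hus]
        rw [h9, map_add, ContinuousLinearMap.map_smul_of_tower, hb2]
        module
      have h10 := hdmin _ hmem
      rw [hpt] at h10
      rw [aux_quad B hsym xs b t] at h10
      change (inner (𝕜 := ℂ) (B xs) xs).re ≤ _ at h10
      linarith
    have hα2 : (inner (𝕜 := ℂ) (B xs) b).re = -(lam * (inner (𝕜 := ℂ) xs w).re) := by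
      rw [hb2, inner_neg_right, aux_smul_right, hBB]
      simp [Complex.mul_re]
    have hw2 : (inner (𝕜 := ℂ) xs w).re
        = (inner (𝕜 := ℂ) xs (c d)).re - (inner (𝕜 := ℂ) xs us).re := by
      rw [hw, inner_sub_right, Complex.sub_re]
    rw [hα2, hw2] at hα
    have := aux_re_symm (c d) xs
    have := aux_re_symm us xs
    nlinarith
  have hhs : h xs = (inner (𝕜 := ℂ) us xs).re := by
    obtain ⟨⟨dh, hdh, hdheq⟩, hub⟩ := hh xs
    refine le_antisymm ?_ (hub ⟨dstar, hdstar, rfl⟩)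
    rw [hdheq]
    exact key dh hdh
  -- h x ≥ Re⟪us, x⟫
  have hhx : (inner (𝕜 := ℂ) us x).re ≤ h x := (hh x).2 ⟨dstar, hdstar, rfl⟩
  -- master identity
  have hsplit : x - v = (x - xs) + (1:ℝ) • (xs - v) := by module
  have hmaster : (inner (𝕜 := ℂ) (B (x - v)) (x - v)).re
      = (inner (𝕜 := ℂ) (B (x - xs)) (x - xs)).re
        - 2 * lam * ((inner (𝕜 := ℂ) us x).re - (inner (𝕜 := ℂ) us xs).re)
        + (inner (𝕜 := ℂ) (B (xs - v)) (xs - v)).re := by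
    rw [hsplit, aux_quad B hsym (x - xs) (xs - v) 1]
    have hxsv : xs - v = -(lam • Binv us) := by rw [hxs]; module
    have hcross : (inner (𝕜 := ℂ) (B (x - xs)) (xs - v)).re
        = -(lam * ((inner (𝕜 := ℂ) us x).re - (inner (𝕜 := ℂ) us xs).re)) := by
      rw [hxsv, inner_neg_right, aux_smul_right, hBB, inner_sub_left]
      have e1 := aux_re_symm x us
      have e2 := aux_re_symm xs us
      simp only [Complex.neg_re, Complex.mul_re, Complex.ofReal_re, Complex.ofReal_im,
        Complex.sub_re]
      rw [← e1, ← e2]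
      ring
    rw [hcross]
    have hxsv2 : (1:ℝ) • (xs - v) = xs - v := one_smul _ _
    ring
  rw [hmaster, hhs]
  have hQx := hQ0 (x - xs)
  nlinarith
end

section
/- Let W be Hermitian positive definite with smallest eigenvalue σ and largest eigenvalue Σ. Then for any proper closed convex function h and any x₁, x₂, the weighted proximal mapping satisfies ‖prox_h^W(x₁) − prox_h^W(x₂)‖ ≤ (Σ/σ)·‖x₁ − x₂‖; in particular prox_h^W is Lipschitz continuous. -/
set_option maxHeartbeats 1000000 in
/-- Lipschitz continuity of the weighted proximal mapping: if `W` is Hermitian with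
`σ‖q‖² ≤ ⟨Wq,q⟩ ≤ Σ‖q‖²` (σ, Σ the smallest/largest eigenvalues, σ > 0), `h` is
proper closed convex, and `p₁, p₂` are the weighted proximal points of `x₁, x₂`,
then `‖p₁ − p₂‖ ≤ (Σ/σ)·‖x₁ − x₂‖`. -/
theorem stmt_17 {N : ℕ}
    (W : EuclideanSpace ℂ (Fin N) →L[ℂ] EuclideanSpace ℂ (Fin N))
    (hW : IsSelfAdjoint W) (σ Sig : ℝ) (hσ : 0 < σ)
    (hlow : ∀ q : EuclideanSpace ℂ (Fin N), σ * ‖q‖ ^ 2 ≤ (@inner ℂ _ _ (W q) q).re)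
    (hhigh : ∀ q : EuclideanSpace ℂ (Fin N), (@inner ℂ _ _ (W q) q).re ≤ Sig * ‖q‖ ^ 2)
    (h : EuclideanSpace ℂ (Fin N) → ℝ) (hconv : ConvexOn ℝ Set.univ h)
    (hlsc : LowerSemicontinuous h)
    (x₁ x₂ p₁ p₂ : EuclideanSpace ℂ (Fin N))
    (hp₁ : ∀ u : EuclideanSpace ℂ (Fin N),
      h p₁ + (1 / 2) * (@inner ℂ _ _ (W (p₁ - x₁)) (p₁ - x₁)).re ≤
        h u + (1 / 2) * (@inner ℂ _ _ (W (u - x₁)) (u - x₁)).re)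
    (hp₂ : ∀ u : EuclideanSpace ℂ (Fin N),
      h p₂ + (1 / 2) * (@inner ℂ _ _ (W (p₂ - x₂)) (p₂ - x₂)).re ≤
        h u + (1 / 2) * (@inner ℂ _ _ (W (u - x₂)) (u - x₂)).re) :
    ‖p₁ - p₂‖ ≤ (Sig / σ) * ‖x₁ - x₂‖ := by
  have hsym : ∀ a b : EuclideanSpace ℂ (Fin N),
      (@inner ℂ _ _ (W a) b).re = (@inner ℂ _ _ (W b) a).re := by
    intro a b
    have h1 : (@inner ℂ _ _ (W a) b) = @inner ℂ _ _ a (W b) :=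
      (ContinuousLinearMap.isSelfAdjoint_iff_isSymmetric.mp hW) a b
    rw [h1, ← inner_conj_symm]
    simp only [Complex.conj_re]
  have hexp : ∀ (a c : EuclideanSpace ℂ (Fin N)) (t : ℝ),
      (@inner ℂ _ _ (W (a + t • c)) (a + t • c)).re
        = (@inner ℂ _ _ (W a) a).re + 2*t*(@inner ℂ _ _ (W a) c).re
          + t^2 * (@inner ℂ _ _ (W c) c).re := by
    intro a c t
    have h1 : W (a + t • c) = W a + t • W c := by
      rw [map_add, W.map_smul_of_tower]
    have h2 : ∀ v : EuclideanSpace ℂ (Fin N), t • v = (t : ℂ) • v := fun v =>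
      RCLike.real_smul_eq_coe_smul (K := ℂ) t v
    rw [h1, h2, h2 c, inner_add_left, inner_add_right, inner_add_right, inner_smul_left,
      inner_smul_right, inner_smul_right, inner_smul_left]
    simp only [Complex.add_re, Complex.mul_re, Complex.conj_re, Complex.conj_im,
      Complex.ofReal_re, Complex.ofReal_im]
    rw [hsym c a]
    ring
  have hQ0 : ∀ q : EuclideanSpace ℂ (Fin N), 0 ≤ (@inner ℂ _ _ (W q) q).re := fun q =>
    le_trans (by positivity) (hlow q)
  have hadd : ∀ a b g : EuclideanSpace ℂ (Fin N),
      (@inner ℂ _ _ (W (a + b)) g).re = (@inner ℂ _ _ (W a) g).re + (@inner ℂ _ _ (W b) g).re := by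
    intro a b g; rw [map_add, inner_add_left, Complex.add_re]
  have hsub : ∀ a b g : EuclideanSpace ℂ (Fin N),
      (@inner ℂ _ _ (W (a - b)) g).re = (@inner ℂ _ _ (W a) g).re - (@inner ℂ _ _ (W b) g).re := by
    intro a b g; rw [map_sub, inner_sub_left, Complex.sub_re]
  have hnegr : ∀ a g : EuclideanSpace ℂ (Fin N),
      (@inner ℂ _ _ (W a) (-g)).re = -(@inner ℂ _ _ (W a) g).re := by
    intro a g; rw [inner_neg_right, Complex.neg_re]
  -- key one-sided subgradient inequality
  have key : ∀ (p x v : EuclideanSpace ℂ (Fin N)),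
      (∀ u, h p + (1 / 2) * (@inner ℂ _ _ (W (p - x)) (p - x)).re ≤
        h u + (1 / 2) * (@inner ℂ _ _ (W (u - x)) (u - x)).re) →
      h p - h v ≤ (@inner ℂ _ _ (W (p - x)) (v - p)).re := by
    intro p x v hp
    set C : ℝ := (@inner ℂ _ _ (W (v - p)) (v - p)).re with hC
    set B : ℝ := (@inner ℂ _ _ (W (p - x)) (v - p)).re with hBd
    have hC0 : 0 ≤ C := hQ0 _
    refine le_of_forall_pos_le_add ?_
    intro ε hε
    set t : ℝ := min 1 (ε / (C + 1)) with ht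
    have ht0 : 0 < t := lt_min one_pos (by positivity)
    have ht1 : t ≤ 1 := min_le_left _ _
    have htε : t * (C + 1) ≤ ε := by
      rw [← le_div_iff₀ (by positivity)]
      exact min_le_right _ _
    have harg : p + t • (v - p) - x = (p - x) + t • (v - p) := add_sub_right_comm p _ x
    have hu := hp (p + t • (v - p))
    rw [harg, hexp (p - x) (v - p) t] at hu
    have hcv := hconv.2 (Set.mem_univ p) (Set.mem_univ v)
      (by linarith : (0:ℝ) ≤ 1 - t) (le_of_lt ht0) (by ring)
    simp only [smul_eq_mul] at hcv
    have heq : (1 - t) • p + t • v = p + t • (v - p) := by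
      rw [smul_sub, sub_smul, one_smul]; abel
    rw [heq] at hcv
    have h3 : t * (h p - h v) ≤ t * B + t^2/2 * C := by nlinarith [hu, hcv]
    have h4 : h p - h v ≤ B + t/2 * C :=
      (mul_le_mul_iff_right₀ ht0).mp (by nlinarith [h3])
    have h5 : t/2 * C ≤ ε := by nlinarith [mul_nonneg ht0.le hC0]
    linarith
  have k1 := key p₁ x₁ p₂ hp₁
  have k2 := key p₂ x₂ p₁ hp₂
  have hcomb : (@inner ℂ _ _ (W (p₁ - x₁)) (p₂ - p₁)).re
      + (@inner ℂ _ _ (W (p₂ - x₂)) (p₁ - p₂)).re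
      = (@inner ℂ _ _ (W (x₁ - x₂)) (p₁ - p₂)).re
        - (@inner ℂ _ _ (W (p₁ - p₂)) (p₁ - p₂)).re := by
    have h1 : p₂ - p₁ = -(p₁ - p₂) := by abel
    have h2 : p₂ - x₂ = (p₁ - x₁) - (p₁ - p₂) + (x₁ - x₂) := by abel
    rw [h1, h2, hnegr (p₁ - x₁), hadd (p₁ - x₁ - (p₁ - p₂)) (x₁ - x₂),
      hsub (p₁ - x₁) (p₁ - p₂)]
    ring
  have hQd : (@inner ℂ _ _ (W (p₁ - p₂)) (p₁ - p₂)).re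
      ≤ (@inner ℂ _ _ (W (x₁ - x₂)) (p₁ - p₂)).re := by
    have hsum : 0 ≤ (@inner ℂ _ _ (W (p₁ - x₁)) (p₂ - p₁)).re
        + (@inner ℂ _ _ (W (p₂ - x₂)) (p₁ - p₂)).re := by linarith
    rw [hcomb] at hsum; linarith
  have hed : (@inner ℂ _ _ (W ((x₁ - x₂) + (-1 : ℝ) • (p₁ - p₂)))
        ((x₁ - x₂) + (-1 : ℝ) • (p₁ - p₂))).re
      = (@inner ℂ _ _ (W (x₁ - x₂)) (x₁ - x₂)).re
        - 2 * (@inner ℂ _ _ (W (x₁ - x₂)) (p₁ - p₂)).re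
        + (@inner ℂ _ _ (W (p₁ - p₂)) (p₁ - p₂)).re := by
    rw [hexp]; ring
  have hed0 := hQ0 ((x₁ - x₂) + (-1 : ℝ) • (p₁ - p₂))
  rw [hed] at hed0
  have hQdQe : (@inner ℂ _ _ (W (p₁ - p₂)) (p₁ - p₂)).re
      ≤ (@inner ℂ _ _ (W (x₁ - x₂)) (x₁ - x₂)).re := by linarith
  have hlo := hlow (p₁ - p₂)
  have hhi := hhigh (x₁ - x₂)
  have hmain : σ * ‖p₁ - p₂‖^2 ≤ Sig * ‖x₁ - x₂‖^2 := by linarith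
  rcases eq_or_ne ‖x₁ - x₂‖ 0 with h0 | h0
  · rw [h0, mul_zero]
    have hd2 : σ * ‖p₁ - p₂‖^2 ≤ 0 := by rw [h0] at hmain; nlinarith
    have h7 : ‖p₁ - p₂‖ ^ 2 ≤ 0 := le_of_mul_le_mul_left (by linarith) hσ
    have h9 : ‖p₁ - p₂‖ ^ 2 = 0 := le_antisymm h7 (sq_nonneg _)
    exact ((pow_eq_zero_iff two_ne_zero).mp h9).le
  · have he2 : 0 < ‖x₁ - x₂‖^2 := by positivity
    have hss : σ ≤ Sig := by
      have := hlow (x₁ - x₂)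
      nlinarith
    have h4 : (σ * ‖p₁ - p₂‖)^2 ≤ (Sig * ‖x₁ - x₂‖)^2 := by
      nlinarith [mul_le_mul_of_nonneg_left hmain hσ.le,
        mul_nonneg (mul_nonneg (sub_nonneg.2 hss) (le_trans hσ.le hss)) (sq_nonneg ‖x₁ - x₂‖)]
    have h5 : σ * ‖p₁ - p₂‖ ≤ Sig * ‖x₁ - x₂‖ := by
      have h6 := Real.sqrt_le_sqrt h4
      rwa [Real.sqrt_sq (mul_nonneg hσ.le (norm_nonneg _)),
        Real.sqrt_sq (mul_nonneg (le_trans hσ.le hss) (norm_nonneg _))] at h6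
    rw [div_mul_eq_mul_div, le_div_iff₀ hσ]
    linarith
end

section
/- Let f : ℂᴺ → ℝ be convex and differentiable (over the real structure), h proper closed convex, B Hermitian positive definite, and a > 0. Then x* is a minimizer of f + λh if and only if x* = prox_{aλh}^B(x* − a B⁻¹ ∇f(x*)). -/
open Filter Set Topology

/-- Directional derivative limit from `HasFDerivAt`. -/
lemma dir_deriv_tendsto {E : Type*} [NormedAddCommGroup E] [NormedSpace ℝ E]
    {f : E → ℝ} {φ : E →L[ℝ] ℝ} {x : E} (hf : HasFDerivAt f φ x) (d : E) :
    Tendsto (fun t : ℝ => (f (x + t • d) - f x) / t) (𝓝[>] 0) (𝓝 (φ d)) := by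
  have hg : HasDerivAt (fun t : ℝ => x + t • d) d 0 := by
    simpa using ((hasDerivAt_id (0 : ℝ)).smul_const d).const_add x
  have h1 : HasDerivAt (fun t : ℝ => f (x + t • d)) (φ d) 0 := by
    have hf2 : HasFDerivAt f φ (x + (0:ℝ) • d) := by simpa using hf
    have := hf2.comp_hasDerivAt (x := (0 : ℝ)) hg
    exact this
  have h2 := hasDerivAt_iff_tendsto_slope.mp h1
  have h3 : Tendsto (slope (fun t : ℝ => f (x + t • d)) 0) (𝓝[>] (0 : ℝ)) (𝓝 (φ d)) :=
    h2.mono_left (nhdsWithin_mono 0 (fun t ht => ne_of_gt ht))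
  refine h3.congr' ?_
  filter_upwards [self_mem_nhdsWithin] with t ht
  have ht' : (t : ℝ) ≠ 0 := ne_of_gt ht
  simp [slope_def_field, div_eq_inv_mul, mul_comm]

/-- Gradient inequality for convex differentiable functions. -/
lemma grad_ineq {E : Type*} [NormedAddCommGroup E] [NormedSpace ℝ E]
    {f : E → ℝ} (hconv : ConvexOn ℝ Set.univ f)
    {φ : E →L[ℝ] ℝ} {x : E} (hf : HasFDerivAt f φ x) (u : E) :
    φ (u - x) ≤ f u - f x := by
  have key : ∀ t ∈ Set.Ioc (0 : ℝ) 1,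
      (f (x + t • (u - x)) - f x) / t ≤ f u - f x := by
    intro t ht
    have hcomb := hconv.2 (Set.mem_univ x) (Set.mem_univ u)
      (show (0:ℝ) ≤ 1 - t by have := ht.2; linarith) ht.1.le (by ring)
    have hx : (1 - t) • x + t • u = x + t • (u - x) := by
      rw [smul_sub, sub_smul, one_smul]; abel
    rw [hx] at hcomb
    rw [div_le_iff₀ ht.1]
    simp only [smul_eq_mul] at hcomb
    nlinarith [hcomb]
  have hmem : Set.Ioc (0 : ℝ) 1 ∈ 𝓝[>] (0 : ℝ) := Ioc_mem_nhdsGT one_pos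
  exact le_of_tendsto (dir_deriv_tendsto hf (u - x))
    (Filter.eventually_of_mem hmem key)

lemma re_inner_smul_left' {N : ℕ} (r : ℝ) (p q : EuclideanSpace ℂ (Fin N)) :
    (@inner ℂ _ _ (r • p) q).re = r * (@inner ℂ _ _ p q).re := by
  rw [← algebraMap_smul ℂ r p, inner_smul_left]
  simp [Complex.mul_re]

lemma re_inner_smul_right' {N : ℕ} (r : ℝ) (p q : EuclideanSpace ℂ (Fin N)) :
    (@inner ℂ _ _ p (r • q)).re = r * (@inner ℂ _ _ p q).re := by
  rw [← algebraMap_smul ℂ r q, inner_smul_right]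
  simp [Complex.mul_re]

set_option maxHeartbeats 1600000


/-- Fixed-point characterization of minimizers: for `f` convex and differentiable
(over the real structure, with gradient `f'` characterized by
`df(x)[u] = Re⟨f'(x), u⟫`), `h` proper closed convex, `B` Hermitian positive
definite with inverse `Binv`, and `a, λ > 0`, the point `x*` minimizes `f + λh`
iff `x* = prox_{aλh}^B(x* − a B⁻¹ f'(x*))`, i.e. iff `x*` minimizes
`u ↦ aλh(u) + (1/2)⟨B(u−v), u−v⟩` with `v = x* − a B⁻¹ f'(x*)`. -/
theorem stmt_18 {N : ℕ} (f : EuclideanSpace ℂ (Fin N) → ℝ)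
    (hf : ConvexOn ℝ Set.univ f)
    (f' : EuclideanSpace ℂ (Fin N) → EuclideanSpace ℂ (Fin N))
    (hf' : ∀ x, HasFDerivAt f
      (Complex.reCLM.comp ((innerSL ℂ (f' x)).restrictScalars ℝ)) x)
    (h : EuclideanSpace ℂ (Fin N) → ℝ) (hconv : ConvexOn ℝ Set.univ h)
    (hlsc : LowerSemicontinuous h)
    (B Binv : EuclideanSpace ℂ (Fin N) →L[ℂ] EuclideanSpace ℂ (Fin N))
    (hB : IsSelfAdjoint B)
    (hBpos : ∀ q : EuclideanSpace ℂ (Fin N), q ≠ 0 → 0 < (@inner ℂ _ _ (B q) q).re)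
    (hBinv : ∀ q, Binv (B q) = q ∧ B (Binv q) = q)
    (a lam : ℝ) (ha : 0 < a) (hlam : 0 < lam)
    (xstar v : EuclideanSpace ℂ (Fin N)) (hv : v = xstar - a • Binv (f' xstar)) :
    (∀ u, f xstar + lam * h xstar ≤ f u + lam * h u) ↔
      ∀ u : EuclideanSpace ℂ (Fin N),
        a * lam * h xstar + (1 / 2) * (@inner ℂ _ _ (B (xstar - v)) (xstar - v)).re ≤
          a * lam * h u + (1 / 2) * (@inner ℂ _ _ (B (u - v)) (u - v)).re := by
  have hφ : ∀ x d : EuclideanSpace ℂ (Fin N),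
      (Complex.reCLM.comp ((innerSL ℂ (f' x)).restrictScalars ℝ)) d
        = (@inner ℂ _ _ (f' x) d).re := fun _ _ => rfl
  have hw : xstar - v = a • Binv (f' xstar) := by rw [hv]; abel
  have hBw : B (xstar - v) = a • f' xstar := by
    rw [hw, B.map_smul_of_tower, (hBinv (f' xstar)).2]
  have hnn : ∀ q : EuclideanSpace ℂ (Fin N), 0 ≤ (@inner ℂ _ _ (B q) q).re := by
    intro q
    by_cases hq : q = 0
    · simp [hq]
    · exact (hBpos q hq).le
  have expand : ∀ u : EuclideanSpace ℂ (Fin N),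
      (@inner ℂ _ _ (B (u - v)) (u - v)).re
        = (@inner ℂ _ _ (B (u - xstar)) (u - xstar)).re
          + 2 * (a * (@inner ℂ _ _ (f' xstar) (u - xstar)).re)
          + (@inner ℂ _ _ (B (xstar - v)) (xstar - v)).re := by
    intro u
    have hu : u - v = (u - xstar) + (xstar - v) := by abel
    set d := u - xstar with hd
    set w := xstar - v with hwdef
    have hsym : @inner ℂ _ _ (B d) w = @inner ℂ _ _ d (B w) := hB.isSymmetric d w
    have h1 : (@inner ℂ _ _ (B (u - v)) (u - v))
        = @inner ℂ _ _ (B d) d + @inner ℂ _ _ (B d) w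
          + @inner ℂ _ _ (B w) d + @inner ℂ _ _ (B w) w := by
      rw [hu, map_add, inner_add_left, inner_add_right, inner_add_right]; ring
    have h2 : (@inner ℂ _ _ (B d) w).re = (@inner ℂ _ _ (B w) d).re := by
      rw [hsym, ← inner_conj_symm (B w) d]
      exact Complex.conj_re _
    have h3 : (@inner ℂ _ _ (B w) d).re = a * (@inner ℂ _ _ (f' xstar) d).re := by
      rw [hBw, re_inner_smul_left']
    rw [h1]
    simp only [Complex.add_re]
    rw [h2, h3]; ring
  constructor
  · intro hmin u
    set d := u - xstar with hd
    have hkey : lam * (h xstar - h u) ≤ (@inner ℂ _ _ (f' xstar) d).re := by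
      have key2 : ∀ t ∈ Set.Ioc (0 : ℝ) 1,
          lam * (h xstar - h u) ≤ (f (xstar + t • d) - f xstar) / t := by
        intro t ht
        have hcomb := hconv.2 (Set.mem_univ xstar) (Set.mem_univ u)
          (show (0:ℝ) ≤ 1 - t by have := ht.2; linarith) ht.1.le (by ring)
        have hx : (1 - t) • xstar + t • u = xstar + t • d := by
          rw [hd, smul_sub, sub_smul, one_smul]; abel
        rw [hx] at hcomb
        have hm := hmin (xstar + t • d)
        simp only [smul_eq_mul] at hcomb
        rw [le_div_iff₀ ht.1]
        nlinarith
      have htend := dir_deriv_tendsto (hf' xstar) d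
      rw [hφ] at htend
      exact ge_of_tendsto htend
        (Filter.eventually_of_mem (Ioc_mem_nhdsGT one_pos) key2)
    rw [expand u]
    have hBd := hnn (u - xstar)
    rw [← hd] at hBd
    nlinarith
  · intro hprox u
    set d := u - xstar with hd
    have hgrad : (@inner ℂ _ _ (f' xstar) d).re ≤ f u - f xstar := by
      have := grad_ineq hf (hf' xstar) u
      rwa [hφ] at this
    have hkey : lam * (h xstar - h u) ≤ (@inner ℂ _ _ (f' xstar) d).re := by
      set K := (@inner ℂ _ _ (B d) d).re with hK
      have key2 : ∀ t ∈ Set.Ioc (0 : ℝ) 1,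
          lam * (h xstar - h u)
            ≤ (@inner ℂ _ _ (f' xstar) d).re + t * (K / (2 * a)) := by
        intro t ht
        have hp := hprox (xstar + t • d)
        rw [expand (xstar + t • d)] at hp
        have e1 : xstar + t • d - xstar = t • d := by abel
        rw [e1] at hp
        have e2 : (@inner ℂ _ _ (B (t • d)) (t • d)).re = t ^ 2 * K := by
          rw [B.map_smul_of_tower, re_inner_smul_left', re_inner_smul_right', hK]
          ring
        have e3 : (@inner ℂ _ _ (f' xstar) (t • d)).re
            = t * (@inner ℂ _ _ (f' xstar) d).re := re_inner_smul_right' t _ _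
        rw [e2, e3] at hp
        have hcomb := hconv.2 (Set.mem_univ xstar) (Set.mem_univ u)
          (show (0:ℝ) ≤ 1 - t by have := ht.2; linarith) ht.1.le (by ring)
        have hx : (1 - t) • xstar + t • u = xstar + t • d := by
          rw [hd, smul_sub, sub_smul, one_smul]; abel
        rw [hx] at hcomb
        simp only [smul_eq_mul] at hcomb
        have ht0 := ht.1
        have h2a : (0:ℝ) < 2 * a := by linarith
        have hmain : lam * (h xstar - h u) * (a * t)
            ≤ ((@inner ℂ _ _ (f' xstar) d).re + t * (K / (2 * a))) * (a * t) := by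
          have expand2 : ((@inner ℂ _ _ (f' xstar) d).re + t * (K / (2 * a))) * (a * t)
              = a * t * (@inner ℂ _ _ (f' xstar) d).re + t ^ 2 * K / 2 := by
            field_simp
          rw [expand2]
          have hml := mul_le_mul_of_nonneg_left hcomb
            (show (0:ℝ) ≤ a * lam by positivity)
          nlinarith [hml, hp]
        have hat : (0:ℝ) < a * t := by positivity
        exact le_of_mul_le_mul_right hmain hat
      have htend : Filter.Tendsto
          (fun t : ℝ => (@inner ℂ _ _ (f' xstar) d).re + t * (K / (2 * a)))
          (nhdsWithin 0 (Set.Ioi 0)) (nhds ((@inner ℂ _ _ (f' xstar) d).re)) := by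
        have hc : Filter.Tendsto
            (fun t : ℝ => (@inner ℂ _ _ (f' xstar) d).re + t * (K / (2 * a)))
            (nhds 0) (nhds ((@inner ℂ _ _ (f' xstar) d).re + 0 * (K / (2 * a)))) :=
          (continuous_const.add (continuous_id.mul continuous_const)).tendsto 0
        simpa using hc.mono_left nhdsWithin_le_nhds
      exact ge_of_tendsto htend
        (Filter.eventually_of_mem (Ioc_mem_nhdsGT one_pos) key2)
    nlinarith
end
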